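/- arXiv:2509.26445 — 2 statements merged into one kernel-verified Lean document; each statement's English description precedes it below -/
import Mathlib

section
/- Let v = (f,g,s) and v' = (f',g',s') be clique vectors for H. Then φ(v') is obtained from φ(v) by a single counterclockwise rotation if and only if exactly one of the following holds: (1) g' = g, s' = s, and f' differs from f at exactly one i₀ ∈ S, with g(f(i₀)) ≠ i₀ and f'(i₀) = max{j ∈ N(i₀) : j < f(i₀)}; (2) f' = f, s' = s, and g' differs from g at exactly one j₀ ∈ T, with f(g(j₀)) ≠ j₀ and g'(j₀) = min{i ∈ N(j₀) : i > g(j₀)}; (3) f' = f, g' = g, and s' differs from s at exactly one edge (i₀,j₀) ∈ E, with s(i₀,j₀) = − and s'(i₀,j₀) = +; (4) s' differs from s at exactly one edge (i₀,j₀) ∈ E, with s(i₀,j₀) = + and s'(i₀,j₀) = −, and either g' = g and f' differs from f only at i₀ with f'(i₀) = max{j ∈ N(i₀) : j < j₀}, or f' = f and g' differs from g only at j₀ with g'(j₀) = min{i ∈ N(j₀) : i > i₀}. -/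
open Finset Filter Pointwise

/-- Neighbors in the right shore `T` of a left vertex `i`. -/
def Nbr (E : Finset (ℕ × ℕ)) (i : ℕ) : Finset ℕ :=
  (E.filter (fun p => p.1 = i)).image Prod.snd

/-- Neighbors in the left shore `S` of a right vertex `j`. -/
def Nbr' (E : Finset (ℕ × ℕ)) (j : ℕ) : Finset ℕ :=
  (E.filter (fun p => p.2 = j)).image Prod.fst

/-- A route of `G(H)`: a triple `(a, (i,j), c)` with `a, c ∈ {1,2}`, `(i,j) ∈ E`,
representing the path `α_{a,i} β_{i,j} γ_{j,c}`. -/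
abbrev Route : Type := ℕ × (ℕ × ℕ) × ℕ

def IsRoute (E : Finset (ℕ × ℕ)) (r : Route) : Prop :=
  (r.1 = 1 ∨ r.1 = 2) ∧ r.2.1 ∈ E ∧ (r.2.2 = 1 ∨ r.2.2 = 2)

/-- Two routes are in conflict with respect to the canonical bipartite framing. -/
def Conflict (r r' : Route) : Prop :=
  (r.2.1 = r'.2.1 ∧
    ((r.1 = 1 ∧ r.2.2 = 2 ∧ r'.1 = 2 ∧ r'.2.2 = 1) ∨
     (r.1 = 2 ∧ r.2.2 = 1 ∧ r'.1 = 1 ∧ r'.2.2 = 2))) ∨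
  (r.2.1.1 = r'.2.1.1 ∧ r.2.1.2 ≠ r'.2.1.2 ∧
    ((r.2.1.2 < r'.2.1.2 ∧ r'.1 = 1 ∧ r.1 = 2) ∨
     (r'.2.1.2 < r.2.1.2 ∧ r.1 = 1 ∧ r'.1 = 2))) ∨
  (r.2.1.2 = r'.2.1.2 ∧ r.2.1.1 ≠ r'.2.1.1 ∧
    ((r.2.1.1 < r'.2.1.1 ∧ r.2.2 = 2 ∧ r'.2.2 = 1) ∨
     (r'.2.1.1 < r.2.1.1 ∧ r'.2.2 = 2 ∧ r.2.2 = 1)))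

/-- A clique: a set of pairwise coherent routes. -/
def IsClique (E : Finset (ℕ × ℕ)) (C : Set Route) : Prop :=
  (∀ r ∈ C, IsRoute E r) ∧ ∀ r ∈ C, ∀ r' ∈ C, r ≠ r' → ¬ Conflict r r'

/-- A maximal clique of routes. -/
def IsMaxClique (E : Finset (ℕ × ℕ)) (C : Set Route) : Prop :=
  IsClique E C ∧ ∀ C' : Set Route, IsClique E C' → C ⊆ C' → C' = C

/-- A clique vector `(f, g, s)` for the bipartite graph `H`; values outside the
domains are normalized (to `0`, resp. `false`). -/
structure CliqueVec (n m : ℕ) (E : Finset (ℕ × ℕ)) where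
  f : ℕ → ℕ
  g : ℕ → ℕ
  s : ℕ × ℕ → Bool
  hf : ∀ i ∈ Finset.Icc 1 n, (i, f i) ∈ E
  hg : ∀ j ∈ Finset.Icc 1 m, (g j, j) ∈ E
  hs : ∀ p ∈ E, s p = true → f p.1 = p.2 ∧ g p.2 = p.1
  hf' : ∀ i ∉ Finset.Icc 1 n, f i = 0
  hg' : ∀ j ∉ Finset.Icc 1 m, g j = 0
  hs' : ∀ p ∉ E, s p = false

/-- The clique map `φ`. -/
def phi {n m : ℕ} {E : Finset (ℕ × ℕ)} (v : CliqueVec n m E) : Set Route :=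
  { r | ∃ a i j c : ℕ, r = (a, (i, j), c) ∧ (i, j) ∈ E ∧
    ((v.f i ≠ j ∧ v.g j ≠ i ∧
        a = (if v.f i < j then 2 else 1) ∧ c = (if v.g j < i then 2 else 1)) ∨
     (v.f i = j ∧ v.g j ≠ i ∧ (a = 1 ∨ a = 2) ∧ c = (if v.g j < i then 2 else 1)) ∨
     (v.g j = i ∧ v.f i ≠ j ∧ a = (if v.f i < j then 2 else 1) ∧ (c = 1 ∨ c = 2)) ∨
     (v.f i = j ∧ v.g j = i ∧ v.s (i, j) = false ∧
        ((a = 1 ∧ c = 1) ∨ (a = 1 ∧ c = 2) ∨ (a = 2 ∧ c = 2))) ∨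
     (v.f i = j ∧ v.g j = i ∧ v.s (i, j) = true ∧
        ((a = 1 ∧ c = 1) ∨ (a = 2 ∧ c = 1) ∨ (a = 2 ∧ c = 2)))) }

/-- `r` is clockwise from `r'` with respect to the canonical bipartite framing. -/
def Clockwise (r r' : Route) : Prop :=
  (r.2.1 = r'.2.1 ∧ r.1 = 1 ∧ r.2.2 = 2 ∧ r'.1 = 2 ∧ r'.2.2 = 1) ∨
  (r.2.1.1 = r'.2.1.1 ∧ r'.2.1.2 < r.2.1.2 ∧ r.1 = 1 ∧ r'.1 = 2) ∨
  (r.2.1.2 = r'.2.1.2 ∧ r.2.1.1 < r'.2.1.1 ∧ r.2.2 = 2 ∧ r'.2.2 = 1)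

/-- `C'` is obtained from `C` by a single counterclockwise rotation. -/
def CCWStep (C C' : Set Route) : Prop :=
  ∃ r ∈ C, ∃ r' ∈ C', Clockwise r r' ∧ C \ {r} = C' \ {r'}

/-- `jval = max { j ∈ N(i) : j < jbound }`. -/
def IsMaxBelow (E : Finset (ℕ × ℕ)) (i jbound jval : ℕ) : Prop :=
  jval ∈ Nbr E i ∧ jval < jbound ∧ ∀ j ∈ Nbr E i, j < jbound → j ≤ jval

/-- `ival = min { i ∈ N(j) : i > ibound }`. -/
def IsMinAbove (E : Finset (ℕ × ℕ)) (j ibound ival : ℕ) : Prop :=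
  ival ∈ Nbr' E j ∧ ibound < ival ∧ ∀ i ∈ Nbr' E j, ibound < i → ival ≤ i


variable {n m : ℕ} {E : Finset (ℕ × ℕ)}

lemma memp (v : CliqueVec n m E) {a i j c : ℕ} :
    (a,(i,j),c) ∈ phi v ↔ ((i,j) ∈ E ∧ (a = 1 ∨ a = 2) ∧ (c = 1 ∨ c = 2) ∧
    (v.f i < j → a = 2) ∧ (j < v.f i → a = 1) ∧ (v.g j < i → c = 2) ∧ (i < v.g j → c = 1) ∧
    (v.f i = j → v.g j = i →
      ((v.s (i,j) = true → ¬(a = 1 ∧ c = 2)) ∧ (v.s (i,j) = false → ¬(a = 2 ∧ c = 1))))) := by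
  constructor
  · rintro ⟨a', i', j', c', heq, hEE, hcase⟩
    simp only [Prod.mk.injEq] at heq
    obtain ⟨rfl, ⟨rfl, rfl⟩, rfl⟩ := heq
    refine ⟨hEE, ?_⟩
    rcases hcase with ⟨h1,h2,h3,h4⟩|⟨h1,h2,h3,h4⟩|⟨h1,h2,h3,h4⟩|⟨h1,h2,h3,h4⟩|⟨h1,h2,h3,h4⟩ <;>
      [skip; skip; skip; (rw [h3]); (rw [h3])] <;>
      first
        | (split_ifs at h3 h4 <;> simp_all <;> omega)
        | (simp_all; try omega)
  · rintro ⟨hEE, ha, hc, h1, h2, h3, h4, h5⟩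
    refine ⟨a, i, j, c, rfl, hEE, ?_⟩
    rcases lt_trichotomy (v.f i) j with hf|hf|hf <;> rcases lt_trichotomy (v.g j) i with hg|hg|hg
    · exact Or.inl ⟨by omega, by omega, by simp [hf, h1 hf], by simp [hg, h3 hg]⟩
    · exact Or.inr (Or.inr (Or.inl ⟨hg, by omega, by simp [hf, h1 hf], hc⟩))
    · exact Or.inl ⟨by omega, by omega, by simp [hf, h1 hf], by simp [if_neg (by omega : ¬ v.g j < i), h4 hg]⟩
    · exact Or.inr (Or.inl ⟨hf, by omega, ha, by simp [hg, h3 hg]⟩)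
    · -- f = j, g = i
      by_cases hb : v.s (i, j) = true
      · exact Or.inr (Or.inr (Or.inr (Or.inr ⟨hf, hg, hb, by
          have := (h5 hf hg).1 hb; omega⟩)))
      · have hb' : v.s (i, j) = false := by simpa using hb
        exact Or.inr (Or.inr (Or.inr (Or.inl ⟨hf, hg, hb', by
          have := (h5 hf hg).2 hb'; omega⟩)))
    · exact Or.inr (Or.inl ⟨hf, by omega, ha, by simp [if_neg (by omega : ¬ v.g j < i), h4 hg]⟩)
    · exact Or.inl ⟨by omega, by omega, by simp [if_neg (by omega : ¬ v.f i < j), h2 hf], by simp [hg, h3 hg]⟩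
    · exact Or.inr (Or.inr (Or.inl ⟨hg, by omega, by simp [if_neg (by omega : ¬ v.f i < j), h2 hf], hc⟩))
    · exact Or.inl ⟨by omega, by omega, by simp [if_neg (by omega : ¬ v.f i < j), h2 hf], by simp [if_neg (by omega : ¬ v.g j < i), h4 hg]⟩

lemma mem_Nbr {i j : ℕ} (h : (i,j) ∈ E) : j ∈ Nbr E i := by
  simp only [Nbr, Finset.mem_image, Finset.mem_filter]
  exact ⟨(i,j), ⟨h, rfl⟩, rfl⟩

lemma Nbr_mem {i j : ℕ} (h : j ∈ Nbr E i) : (i,j) ∈ E := by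
  simp only [Nbr, Finset.mem_image, Finset.mem_filter] at h
  obtain ⟨⟨pi, pj⟩, ⟨hp, h1⟩, h2⟩ := h
  cases h1; cases h2; exact hp

lemma mem_Nbr' {i j : ℕ} (h : (i,j) ∈ E) : i ∈ Nbr' E j := by
  simp only [Nbr', Finset.mem_image, Finset.mem_filter]
  exact ⟨(i,j), ⟨h, rfl⟩, rfl⟩

lemma Nbr'_mem {i j : ℕ} (h : i ∈ Nbr' E j) : (i,j) ∈ E := by
  simp only [Nbr', Finset.mem_image, Finset.mem_filter] at h
  obtain ⟨⟨pi, pj⟩, ⟨hp, h1⟩, h2⟩ := h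
  cases h1; cases h2; exact hp

lemma ex_mem (v : CliqueVec n m E) {i j : ℕ} (h : (i,j) ∈ E) :
    ∃ a c, (a,(i,j),c) ∈ phi v := by
  refine ⟨if j < v.f i then 1 else 2, if i < v.g j then 1 else 2, (memp v).2 ⟨h, ?_⟩⟩
  split_ifs <;> refine ⟨by omega, by omega, by omega, by omega, by omega, by omega, ?_⟩ <;>
    (intro h1 h2; constructor <;> intro _ <;> omega)

lemma f_lt_iff (v : CliqueVec n m E) {i j : ℕ} (h : (i,j) ∈ E) :
    v.f i < j ↔ ¬ ∃ c, (1,(i,j),c) ∈ phi v := by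
  constructor
  · rintro hlt ⟨c, hc⟩
    have := ((memp v).1 hc).2.2.2.1 hlt; omega
  · intro hne
    by_contra hge
    exact hne ⟨if v.g j < i then 2 else 1, (memp v).2 ⟨h, by
      split_ifs <;> refine ⟨by omega, by omega, by omega, by omega, by omega, by omega, ?_⟩ <;>
        (intro h1 h2; constructor <;> intro _ <;> omega)⟩⟩

lemma f_gt_iff (v : CliqueVec n m E) {i j : ℕ} (h : (i,j) ∈ E) :
    j < v.f i ↔ ¬ ∃ c, (2,(i,j),c) ∈ phi v := by
  constructor
  · rintro hlt ⟨c, hc⟩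
    have := ((memp v).1 hc).2.2.2.2.1 hlt; omega
  · intro hne
    by_contra hge
    exact hne ⟨if i < v.g j then 1 else 2, (memp v).2 ⟨h, by
      split_ifs <;> refine ⟨by omega, by omega, by omega, by omega, by omega, by omega, ?_⟩ <;>
        (intro h1 h2; constructor <;> intro _ <;> omega)⟩⟩

lemma g_lt_iff (v : CliqueVec n m E) {i j : ℕ} (h : (i,j) ∈ E) :
    v.g j < i ↔ ¬ ∃ a, (a,(i,j),1) ∈ phi v := by
  constructor
  · rintro hlt ⟨a, ha⟩
    have := ((memp v).1 ha).2.2.2.2.2.1 hlt; omega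
  · intro hne
    by_contra hge
    exact hne ⟨if v.f i < j then 2 else 1, (memp v).2 ⟨h, by
      split_ifs <;> refine ⟨by omega, by omega, by omega, by omega, by omega, by omega, ?_⟩ <;>
        (intro h1 h2; constructor <;> intro _ <;> omega)⟩⟩

lemma g_gt_iff (v : CliqueVec n m E) {i j : ℕ} (h : (i,j) ∈ E) :
    i < v.g j ↔ ¬ ∃ a, (a,(i,j),2) ∈ phi v := by
  constructor
  · rintro hlt ⟨a, ha⟩
    have := ((memp v).1 ha).2.2.2.2.2.2.1 hlt; omega
  · intro hne
    by_contra hge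
    exact hne ⟨if j < v.f i then 1 else 2, (memp v).2 ⟨h, by
      split_ifs <;> refine ⟨by omega, by omega, by omega, by omega, by omega, by omega, ?_⟩ <;>
        (intro h1 h2; constructor <;> intro _ <;> omega)⟩⟩

def FibEq (v v' : CliqueVec n m E) (i j : ℕ) : Prop :=
  ∀ a c, ((a,(i,j),c) ∈ phi v ↔ (a,(i,j),c) ∈ phi v')

lemma fib_f_lt {v v' : CliqueVec n m E} {i j : ℕ} (h : (i,j) ∈ E) (hf : FibEq v v' i j) :
    (v.f i < j ↔ v'.f i < j) := by
  rw [f_lt_iff v h, f_lt_iff v' h]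
  exact not_congr (exists_congr fun c => hf 1 c)

lemma fib_f_gt {v v' : CliqueVec n m E} {i j : ℕ} (h : (i,j) ∈ E) (hf : FibEq v v' i j) :
    (j < v.f i ↔ j < v'.f i) := by
  rw [f_gt_iff v h, f_gt_iff v' h]
  exact not_congr (exists_congr fun c => hf 2 c)

lemma fib_f_eq {v v' : CliqueVec n m E} {i j : ℕ} (h : (i,j) ∈ E) (hf : FibEq v v' i j) :
    (v.f i = j ↔ v'.f i = j) := by
  have h1 := fib_f_lt h hf; have h2 := fib_f_gt h hf; omega

lemma fib_g_lt {v v' : CliqueVec n m E} {i j : ℕ} (h : (i,j) ∈ E) (hf : FibEq v v' i j) :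
    (v.g j < i ↔ v'.g j < i) := by
  rw [g_lt_iff v h, g_lt_iff v' h]
  exact not_congr (exists_congr fun a => hf a 1)

lemma fib_g_gt {v v' : CliqueVec n m E} {i j : ℕ} (h : (i,j) ∈ E) (hf : FibEq v v' i j) :
    (i < v.g j ↔ i < v'.g j) := by
  rw [g_gt_iff v h, g_gt_iff v' h]
  exact not_congr (exists_congr fun a => hf a 2)

lemma fib_g_eq {v v' : CliqueVec n m E} {i j : ℕ} (h : (i,j) ∈ E) (hf : FibEq v v' i j) :
    (v.g j = i ↔ v'.g j = i) := by
  have h1 := fib_g_lt h hf; have h2 := fib_g_gt h hf; omega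

lemma s_false (v : CliqueVec n m E) {i j : ℕ} (h : (i,j) ∈ E)
    (hne : ¬ (v.f i = j ∧ v.g j = i)) : v.s (i,j) = false := by
  by_contra hb
  have hb' : v.s (i,j) = true := by simpa using hb
  exact hne (v.hs (i,j) h hb')

lemma s_true_iff (v : CliqueVec n m E) {i j : ℕ} (h : (i,j) ∈ E)
    (hfij : v.f i = j) (hgij : v.g j = i) :
    v.s (i,j) = true ↔ (1,(i,j),2) ∉ phi v := by
  constructor
  · intro hb hmem
    exact (((memp v).1 hmem).2.2.2.2.2.2.2 hfij hgij).1 hb ⟨rfl, rfl⟩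
  · intro hmem
    by_contra hb
    have hb' : v.s (i,j) = false := by simpa using hb
    exact hmem ((memp v).2 ⟨h, by omega, by omega, by omega, by omega, by omega, by omega,
      fun _ _ => ⟨fun ht => by rw [hb'] at ht; exact absurd ht (by simp), fun _ => by omega⟩⟩)

lemma s_false_iff (v : CliqueVec n m E) {i j : ℕ} (h : (i,j) ∈ E)
    (hfij : v.f i = j) (hgij : v.g j = i) :
    v.s (i,j) = false ↔ (2,(i,j),1) ∉ phi v := by
  constructor
  · intro hb hmem
    exact (((memp v).1 hmem).2.2.2.2.2.2.2 hfij hgij).2 hb ⟨rfl, rfl⟩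
  · intro hmem
    by_contra hb
    have hb' : v.s (i,j) = true := by simpa using hb
    exact hmem ((memp v).2 ⟨h, by omega, by omega, by omega, by omega, by omega, by omega,
      fun _ _ => ⟨fun _ => by omega, fun ht => by rw [hb'] at ht; exact absurd ht (by simp)⟩⟩)

lemma fib_s {v v' : CliqueVec n m E} {i j : ℕ} (h : (i,j) ∈ E) (hf : FibEq v v' i j) :
    v.s (i,j) = v'.s (i,j) := by
  by_cases hfe : v.f i = j ∧ v.g j = i
  · have hfe' : v'.f i = j ∧ v'.g j = i :=
      ⟨(fib_f_eq h hf).1 hfe.1, (fib_g_eq h hf).1 hfe.2⟩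
    rw [Bool.eq_iff_iff, s_true_iff v h hfe.1 hfe.2, s_true_iff v' h hfe'.1 hfe'.2]
    exact not_congr (hf 1 2)
  · have hfe' : ¬ (v'.f i = j ∧ v'.g j = i) := by
      intro hc; exact hfe ⟨(fib_f_eq h hf).2 hc.1, (fib_g_eq h hf).2 hc.2⟩
    rw [s_false v h hfe, s_false v' h hfe']

lemma fix_f {v v' : CliqueVec n m E} {i j1 j2 : ℕ} (hi : i ∈ Finset.Icc 1 n)
    (hfe : ∀ jj, (i,jj) ∈ E → jj ≠ j1 → jj ≠ j2 → FibEq v v' i jj)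
    (hne : v'.f i ≠ v.f i) :
    (v.f i = j1 ∨ v.f i = j2) ∧ (v'.f i = j1 ∨ v'.f i = j2) := by
  constructor
  · by_contra hc
    push_neg at hc
    have hE1 : (i, v.f i) ∈ E := v.hf i hi
    have := (fib_f_eq hE1 (hfe _ hE1 hc.1 hc.2)).1 rfl
    omega
  · by_contra hc
    push_neg at hc
    have hE1 : (i, v'.f i) ∈ E := v'.hf i hi
    have := (fib_f_eq hE1 (hfe _ hE1 hc.1 hc.2)).2 rfl
    omega

lemma fix_g {v v' : CliqueVec n m E} {j i1 i2 : ℕ} (hj : j ∈ Finset.Icc 1 m)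
    (hfe : ∀ ii, (ii,j) ∈ E → ii ≠ i1 → ii ≠ i2 → FibEq v v' ii j)
    (hne : v'.g j ≠ v.g j) :
    (v.g j = i1 ∨ v.g j = i2) ∧ (v'.g j = i1 ∨ v'.g j = i2) := by
  constructor
  · by_contra hc
    push_neg at hc
    have hE1 : (v.g j, j) ∈ E := v.hg j hj
    have := (fib_g_eq hE1 (hfe _ hE1 hc.1 hc.2)).1 rfl
    omega
  · by_contra hc
    push_neg at hc
    have hE1 : (v'.g j, j) ∈ E := v'.hg j hj
    have := (fib_g_eq hE1 (hfe _ hE1 hc.1 hc.2)).2 rfl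
    omega
lemma rev_s {v v' : CliqueVec n m E} (hf : v'.f = v.f) (hg : v'.g = v.g)
    {i j : ℕ} (hp : (i,j) ∈ E) (hs1 : v.s (i,j) = false) (hs2 : v'.s (i,j) = true)
    (hsoff : ∀ q, q ≠ (i,j) → v'.s q = v.s q) :
    CCWStep (phi v) (phi v') := by
  obtain ⟨hfij'0, hgij'0⟩ := v'.hs (i,j) hp hs2
  have hfij' : v'.f i = j := hfij'0
  have hgij' : v'.g j = i := hgij'0
  have hfij : v.f i = j := by rw [← hf]; exact hfij'
  have hgij : v.g j = i := by rw [← hg]; exact hgij'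
  have hns : ¬ v.s (i,j) = true := by simp [hs1]
  have hns' : ¬ v'.s (i,j) = false := by simp [hs2]
  refine ⟨(1,(i,j),2), ?_, (2,(i,j),1), ?_, Or.inl ⟨rfl, rfl, rfl, rfl, rfl⟩, ?_⟩
  · exact (memp v).2 ⟨hp, by omega, by omega, by omega, by omega, by omega, by omega,
      fun _ _ => ⟨fun ht => absurd ht hns, fun _ => by omega⟩⟩
  · exact (memp v').2 ⟨hp, by omega, by omega, by omega, by omega, by omega, by omega,
      fun _ _ => ⟨fun _ => by omega, fun ht => absurd ht hns'⟩⟩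
  · ext ⟨aa, ⟨ii, jj⟩, cc⟩
    simp only [Set.mem_diff, Set.mem_singleton_iff, Prod.mk.injEq]
    by_cases hEE : (ii,jj) ∈ E
    swap
    · constructor <;> rintro ⟨hmem, -⟩ <;> exact absurd ((memp _).1 hmem).1 hEE
    by_cases hij : ii = i ∧ jj = j
    · obtain ⟨rfl, rfl⟩ := hij
      constructor
      · rintro ⟨hmem, hner⟩
        obtain ⟨-, ha, hc, -, -, -, -, h8⟩ := (memp v).1 hmem
        have h8' := (h8 hfij hgij).2 hs1
        exact ⟨(memp v').2 ⟨hEE, ha, hc, by omega, by omega, by omega, by omega,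
          fun _ _ => ⟨fun _ => by omega, fun ht => absurd ht hns'⟩⟩, by omega⟩
      · rintro ⟨hmem, hner⟩
        obtain ⟨-, ha, hc, -, -, -, -, h8⟩ := (memp v').1 hmem
        have h8' := (h8 hfij' hgij').1 hs2
        exact ⟨(memp v).2 ⟨hEE, ha, hc, by omega, by omega, by omega, by omega,
          fun _ _ => ⟨fun ht => absurd ht hns, fun _ => by omega⟩⟩, by omega⟩
    · have hss : v'.s (ii,jj) = v.s (ii,jj) := hsoff _ (by
        simp only [Ne, Prod.mk.injEq]; exact fun h => hij h)
      have hx : ¬(aa = 1 ∧ (ii = i ∧ jj = j) ∧ cc = 2) := fun h => hij h.2.1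
      have hy : ¬(aa = 2 ∧ (ii = i ∧ jj = j) ∧ cc = 1) := fun h => hij h.2.1
      simp only [memp, hf, hg, hss, hx, hy, not_false_iff, and_true]

lemma rev_f {v v' : CliqueVec n m E} {i : ℕ} (hi : i ∈ Finset.Icc 1 n)
    (hg : v'.g = v.g) (hfoff : ∀ k, k ≠ i → v'.f k = v.f k)
    (hmax : IsMaxBelow E i (v.f i) (v'.f i))
    (hsoff : ∀ q, q ≠ (i, v.f i) → v'.s q = v.s q)
    (hsat : v.g (v.f i) = i → v.s (i, v.f i) = true) :
    CCWStep (phi v) (phi v') := by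
  have hgg : ∀ jj, v'.g jj = v.g jj := fun jj => by rw [hg]
  have hjE : (i, v.f i) ∈ E := v.hf i hi
  have hj'E : (i, v'.f i) ∈ E := Nbr_mem hmax.1
  have hlt : v'.f i < v.f i := hmax.2.1
  have hmx := hmax.2.2
  have hsF' : v.s (i, v'.f i) = false := s_false v hj'E (fun hh => by omega)
  have hs'F' : v'.s (i, v'.f i) = false := by
    rw [hsoff (i, v'.f i) (by simp only [Ne, Prod.mk.injEq]; omega)]; exact hsF'
  have hs'F : v'.s (i, v.f i) = false := s_false v' hjE (fun hh => by omega)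
  obtain ⟨c1, hc1a, hc1b⟩ : ∃ c : ℕ, (v.g (v.f i) < i → c = 2) ∧ (¬ v.g (v.f i) < i → c = 1) :=
    ⟨if v.g (v.f i) < i then 2 else 1, by split_ifs <;> simp_all⟩
  obtain ⟨c2, hc2a, hc2b⟩ : ∃ c : ℕ, (i < v.g (v'.f i) → c = 1) ∧ (¬ i < v.g (v'.f i) → c = 2) :=
    ⟨if i < v.g (v'.f i) then 1 else 2, by split_ifs <;> simp_all⟩
  refine ⟨(1,(i, v.f i), c1), ?_, (2,(i, v'.f i), c2), ?_, Or.inr (Or.inl ⟨rfl, hlt, rfl, rfl⟩), ?_⟩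
  · refine (memp v).2 ⟨hjE, by omega, by omega, by omega, by omega, by omega, by omega,
      fun _ hgeq => ⟨fun _ => by omega, fun _ => by omega⟩⟩
  · refine (memp v').2 ⟨hj'E, by omega, by omega, by omega, by omega, ?_, ?_,
      fun _ hgeq => ⟨fun _ => by omega, fun _ => ?_⟩⟩
    · rw [hgg]; omega
    · rw [hgg]; omega
    · rw [hgg] at hgeq; omega
  · ext ⟨aa, ⟨ii, jj⟩, cc⟩
    simp only [Set.mem_diff, Set.mem_singleton_iff, Prod.mk.injEq]
    by_cases hEE : (ii,jj) ∈ E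
    swap
    · constructor <;> rintro ⟨hmem, -⟩ <;> exact absurd ((memp _).1 hmem).1 hEE
    by_cases hii : ii = i
    swap
    · have hss : v'.s (ii,jj) = v.s (ii,jj) :=
        hsoff _ (by simp only [Ne, Prod.mk.injEq]; exact fun h => hii h.1)
      have hx : ¬(aa = 1 ∧ (ii = i ∧ jj = v.f i) ∧ cc = c1) := fun h => hii h.2.1.1
      have hy : ¬(aa = 2 ∧ (ii = i ∧ jj = v'.f i) ∧ cc = c2) := fun h => hii h.2.1.1
      simp only [memp, hfoff ii hii, hgg, hss, hx, hy, not_false_iff, and_true]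
    have hii2 := hii.symm
    subst hii2
    by_cases h1 : jj = v.f i
    · subst h1
      constructor
      · rintro ⟨hmem, hner⟩
        obtain ⟨-, ha, hc, o1, o2, o3, o4, h8⟩ := (memp v).1 hmem
        have haa : aa = 2 := by
          by_cases hgj : v.g (v.f i) = i
          · have h8' := (h8 rfl hgj).1 (hsat hgj)
            omega
          · omega
        refine ⟨(memp v').2 ⟨hEE, ha, hc, by omega, by omega, ?_, ?_,
          fun hfe _ => absurd hfe (by omega)⟩, by omega⟩
        · rw [hgg]; omega
        · rw [hgg]; omega
      · rintro ⟨hmem, hner⟩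
        obtain ⟨-, ha, hc, o1, o2, o3, o4, h8⟩ := (memp v').1 hmem
        rw [hgg] at o3 o4
        have haa : aa = 2 := o1 hlt
        refine ⟨(memp v).2 ⟨hEE, ha, hc, by omega, by omega, by omega, by omega,
          fun _ hgeq => ⟨fun _ => by omega, fun hsf => ?_⟩⟩, by omega⟩
        rw [hsat hgeq] at hsf; cases hsf
    by_cases h2 : jj = v'.f i
    · subst h2
      constructor
      · rintro ⟨hmem, hner⟩
        obtain ⟨-, ha, hc, o1, o2, o3, o4, h8⟩ := (memp v).1 hmem
        have haa : aa = 1 := o2 hlt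
        refine ⟨(memp v').2 ⟨hEE, ha, hc, by omega, by omega, ?_, ?_,
          fun _ hgeq => ⟨fun hst => ?_, fun _ => by omega⟩⟩, by omega⟩
        · rw [hgg]; omega
        · rw [hgg]; omega
        · rw [hs'F'] at hst; cases hst
      · rintro ⟨hmem, hner⟩
        obtain ⟨-, ha, hc, o1, o2, o3, o4, h8⟩ := (memp v').1 hmem
        rw [hgg] at o3 o4
        have haa : aa = 1 := by
          by_cases hgek : v.g (v'.f i) = i
          · have h8' := (h8 rfl (by rw [hgg]; exact hgek)).2 hs'F'
            omega
          · omega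
        refine ⟨(memp v).2 ⟨hEE, ha, hc, by omega, by omega, by omega, by omega,
          fun hfe _ => absurd hfe (by omega)⟩, by omega⟩
    · have hmj := hmx jj (mem_Nbr hEE)
      have hss : v'.s (i,jj) = v.s (i,jj) :=
        hsoff _ (by simp only [Ne, Prod.mk.injEq]; exact fun h => h1 h.2)
      constructor
      · rintro ⟨hmem, hner⟩
        obtain ⟨-, ha, hc, o1, o2, o3, o4, h8⟩ := (memp v).1 hmem
        refine ⟨(memp v').2 ⟨hEE, ha, hc, by omega, by omega, ?_, ?_,
          fun hfe _ => absurd hfe (by omega)⟩, by omega⟩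
        · rw [hgg]; omega
        · rw [hgg]; omega
      · rintro ⟨hmem, hner⟩
        obtain ⟨-, ha, hc, o1, o2, o3, o4, h8⟩ := (memp v').1 hmem
        rw [hgg] at o3 o4
        refine ⟨(memp v).2 ⟨hEE, ha, hc, by omega, by omega, by omega, by omega,
          fun hfe _ => absurd hfe (by omega)⟩, by omega⟩

lemma rev_g {v v' : CliqueVec n m E} {j : ℕ} (hj : j ∈ Finset.Icc 1 m)
    (hf : v'.f = v.f) (hgoff : ∀ k, k ≠ j → v'.g k = v.g k)
    (hmin : IsMinAbove E j (v.g j) (v'.g j))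
    (hsoff : ∀ q, q ≠ (v.g j, j) → v'.s q = v.s q)
    (hsat : v.f (v.g j) = j → v.s (v.g j, j) = true) :
    CCWStep (phi v) (phi v') := by
  have hff : ∀ k, v'.f k = v.f k := fun k => by rw [hf]
  have hjE : (v.g j, j) ∈ E := v.hg j hj
  have hj'E : (v'.g j, j) ∈ E := Nbr'_mem hmin.1
  have hlt : v.g j < v'.g j := hmin.2.1
  have hmn := hmin.2.2
  have hsI' : v.s (v'.g j, j) = false := s_false v hj'E (fun hh => by omega)
  have hs'I' : v'.s (v'.g j, j) = false := by
    rw [hsoff (v'.g j, j) (by simp only [Ne, Prod.mk.injEq]; omega)]; exact hsI'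
  have hs'I : v'.s (v.g j, j) = false := s_false v' hjE (fun hh => by omega)
  obtain ⟨a1, ha1a, ha1b⟩ : ∃ a : ℕ, (j < v.f (v.g j) → a = 1) ∧ (¬ j < v.f (v.g j) → a = 2) :=
    ⟨if j < v.f (v.g j) then 1 else 2, by split_ifs <;> simp_all⟩
  obtain ⟨a2, ha2a, ha2b⟩ : ∃ a : ℕ, (v.f (v'.g j) < j → a = 2) ∧ (¬ v.f (v'.g j) < j → a = 1) :=
    ⟨if v.f (v'.g j) < j then 2 else 1, by split_ifs <;> simp_all⟩
  refine ⟨(a1,(v.g j, j), 2), ?_, (a2,(v'.g j, j), 1), ?_, Or.inr (Or.inr ⟨rfl, hlt, rfl, rfl⟩), ?_⟩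
  · refine (memp v).2 ⟨hjE, by omega, by omega, by omega, by omega, by omega, by omega,
      fun hfe _ => ⟨fun _ => by omega, fun _ => by omega⟩⟩
  · refine (memp v').2 ⟨hj'E, by omega, by omega, ?_, ?_, by omega, by omega,
      fun hfe _ => ⟨fun hst => ?_, fun _ => ?_⟩⟩
    · rw [hff]; omega
    · rw [hff]; omega
    · rw [hs'I'] at hst; cases hst
    · rw [hff] at hfe; omega
  · ext ⟨aa, ⟨ii, jj⟩, cc⟩
    simp only [Set.mem_diff, Set.mem_singleton_iff, Prod.mk.injEq]
    by_cases hEE : (ii,jj) ∈ E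
    swap
    · constructor <;> rintro ⟨hmem, -⟩ <;> exact absurd ((memp _).1 hmem).1 hEE
    by_cases hjj : jj = j
    swap
    · have hss : v'.s (ii,jj) = v.s (ii,jj) :=
        hsoff _ (by simp only [Ne, Prod.mk.injEq]; exact fun h => hjj h.2)
      have hx : ¬(aa = a1 ∧ (ii = v.g j ∧ jj = j) ∧ cc = 2) := fun h => hjj h.2.1.2
      have hy : ¬(aa = a2 ∧ (ii = v'.g j ∧ jj = j) ∧ cc = 1) := fun h => hjj h.2.1.2
      simp only [memp, hff, hgoff jj hjj, hss, hx, hy, not_false_iff, and_true]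
    have hjj2 := hjj.symm
    subst hjj2
    by_cases h1 : ii = v.g j
    · subst h1
      constructor
      · rintro ⟨hmem, hner⟩
        obtain ⟨-, ha, hc, o1, o2, o3, o4, h8⟩ := (memp v).1 hmem
        have hcc : cc = 1 := by
          by_cases hfj : v.f (v.g j) = j
          · have h8' := (h8 hfj rfl).1 (hsat hfj)
            omega
          · omega
        refine ⟨(memp v').2 ⟨hEE, ha, hc, ?_, ?_, by omega, by omega,
          fun _ hgeq => absurd hgeq (by omega)⟩, by omega⟩
        · rw [hff]; omega
        · rw [hff]; omega
      · rintro ⟨hmem, hner⟩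
        obtain ⟨-, ha, hc, o1, o2, o3, o4, h8⟩ := (memp v').1 hmem
        rw [hff] at o1 o2
        have hcc : cc = 1 := o4 hlt
        refine ⟨(memp v).2 ⟨hEE, ha, hc, by omega, by omega, by omega, by omega,
          fun hfe _ => ⟨fun _ => by omega, fun hsf => ?_⟩⟩, by omega⟩
        rw [hsat hfe] at hsf; cases hsf
    by_cases h2 : ii = v'.g j
    · subst h2
      constructor
      · rintro ⟨hmem, hner⟩
        obtain ⟨-, ha, hc, o1, o2, o3, o4, h8⟩ := (memp v).1 hmem
        have hcc : cc = 2 := o3 hlt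
        refine ⟨(memp v').2 ⟨hEE, ha, hc, ?_, ?_, by omega, by omega,
          fun hfe _ => ⟨fun hst => ?_, fun _ => by omega⟩⟩, by omega⟩
        · rw [hff]; omega
        · rw [hff]; omega
        · rw [hs'I'] at hst; cases hst
      · rintro ⟨hmem, hner⟩
        obtain ⟨-, ha, hc, o1, o2, o3, o4, h8⟩ := (memp v').1 hmem
        rw [hff] at o1 o2
        have hcc : cc = 2 := by
          by_cases hfek : v.f (v'.g j) = j
          · have h8' := (h8 (by rw [hff]; exact hfek) rfl).2 hs'I'
            omega
          · omega
        refine ⟨(memp v).2 ⟨hEE, ha, hc, by omega, by omega, by omega, by omega,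
          fun _ hgeq => absurd hgeq (by omega)⟩, by omega⟩
    · have hmi := hmn ii (mem_Nbr' hEE)
      have hss : v'.s (ii,j) = v.s (ii,j) :=
        hsoff _ (by simp only [Ne, Prod.mk.injEq]; exact fun h => h1 h.1)
      constructor
      · rintro ⟨hmem, hner⟩
        obtain ⟨-, ha, hc, o1, o2, o3, o4, h8⟩ := (memp v).1 hmem
        refine ⟨(memp v').2 ⟨hEE, ha, hc, ?_, ?_, by omega, by omega,
          fun _ hgeq => absurd hgeq (by omega)⟩, by omega⟩
        · rw [hff]; omega
        · rw [hff]; omega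
      · rintro ⟨hmem, hner⟩
        obtain ⟨-, ha, hc, o1, o2, o3, o4, h8⟩ := (memp v').1 hmem
        rw [hff] at o1 o2
        refine ⟨(memp v).2 ⟨hEE, ha, hc, by omega, by omega, by omega, by omega,
          fun _ hgeq => absurd hgeq (by omega)⟩, by omega⟩

lemma feq_of_fib {v v' : CliqueVec n m E} {k : ℕ} (hk : k ∈ Finset.Icc 1 n)
    (hfib : FibEq v v' k (v.f k)) : v'.f k = v.f k :=
  (fib_f_eq (v.hf k hk) hfib).1 rfl

lemma geq_of_fib {v v' : CliqueVec n m E} {k : ℕ} (hk : k ∈ Finset.Icc 1 m)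
    (hfib : FibEq v v' (v.g k) k) : v'.g k = v.g k :=
  (fib_g_eq (v.hg k hk) hfib).1 rfl

lemma feq_of_fib' {v v' : CliqueVec n m E} {k : ℕ} (hk : k ∈ Finset.Icc 1 n)
    (hfib : FibEq v v' k (v'.f k)) : v'.f k = v.f k :=
  ((fib_f_eq (v'.hf k hk) hfib).2 rfl).symm

lemma geq_of_fib' {v v' : CliqueVec n m E} {k : ℕ} (hk : k ∈ Finset.Icc 1 m)
    (hfib : FibEq v v' (v'.g k) k) : v'.g k = v.g k :=
  ((fib_g_eq (v'.hg k hk) hfib).2 rfl).symm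

set_option maxHeartbeats 1000000 in
lemma fwdB {v v' : CliqueVec n m E}
    (hE : ∀ p ∈ E, 1 ≤ p.1 ∧ p.1 ≤ n ∧ 1 ≤ p.2 ∧ p.2 ≤ m)
    {a c a' c' i j j' : ℕ}
    (hr : (a,(i,j),c) ∈ phi v) (hr' : (a',(i,j'),c') ∈ phi v')
    (hlt : j' < j) (ha1 : a = 1) (ha2' : a' = 2)
    (heq : phi v \ {(a,(i,j),c)} = phi v' \ {(a',(i,j'),c')}) :
    ((∃ i₀, 1 ≤ i₀ ∧ i₀ ≤ n ∧ v'.g = v.g ∧ v'.s = v.s ∧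
          v'.f i₀ ≠ v.f i₀ ∧ (∀ i, i ≠ i₀ → v'.f i = v.f i) ∧
          v.g (v.f i₀) ≠ i₀ ∧ IsMaxBelow E i₀ (v.f i₀) (v'.f i₀)) ∨
     (∃ p ∈ E, v.s p = true ∧ v'.s p = false ∧ (∀ q, q ≠ p → v'.s q = v.s q) ∧
          ((v'.g = v.g ∧ (∀ i, i ≠ p.1 → v'.f i = v.f i) ∧
              IsMaxBelow E p.1 p.2 (v'.f p.1)) ∨
           (v'.f = v.f ∧ (∀ j, j ≠ p.2 → v'.g j = v.g j) ∧
              IsMinAbove E p.2 p.1 (v'.g p.2))))) := by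
  subst ha1 ha2'
  obtain ⟨hE1, ha12, hc12, o1, o2, o3, o4, h8⟩ := (memp v).1 hr
  obtain ⟨hE1', ha12', hc12', o1', o2', o3', o4', h8'⟩ := (memp v').1 hr'
  have key : ∀ x : Route, (x ∈ phi v ∧ x ≠ (1,(i,j),c)) ↔ (x ∈ phi v' ∧ x ≠ (2,(i,j'),c')) := by
    intro x
    have h := Set.ext_iff.mp heq x
    simpa [Set.mem_diff] using h
  have hfib : ∀ ii jj, ¬(ii = i ∧ jj = j) → ¬(ii = i ∧ jj = j') → FibEq v v' ii jj := by
    intro ii jj hn1 hn2 aa cc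
    have k := key (aa,(ii,jj),cc)
    have e1 : (aa,(ii,jj),cc) ≠ (1,(i,j),c) := by
      simp only [Ne, Prod.mk.injEq]; intro hh; exact hn1 ⟨hh.2.1.1, hh.2.1.2⟩
    have e2 : (aa,(ii,jj),cc) ≠ (2,(i,j'),c') := by
      simp only [Ne, Prod.mk.injEq]; intro hh; exact hn2 ⟨hh.2.1.1, hh.2.1.2⟩
    constructor
    · intro hm; exact (k.1 ⟨hm, e1⟩).1
    · intro hm; exact ((k.symm).1 ⟨hm, e2⟩).1
  have hi : i ∈ Finset.Icc 1 n := by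
    have := hE _ hE1; simp only [Finset.mem_Icc]; exact ⟨this.1, this.2.1⟩
  have hflt : ¬ (v.f i < j) := fun h => by have := o1 h; omega
  have hfgt' : ¬ (j' < v'.f i) := fun h => by have := o2' h; omega
  have hne : v'.f i ≠ v.f i := by omega
  have hfix := fix_f hi (fun jj hEjj hn1 hn2 =>
    hfib i jj (fun hh => hn1 hh.2) (fun hh => hn2 hh.2)) hne
  have hfi : v.f i = j := by rcases hfix.1 with h | h <;> omega
  have hfi' : v'.f i = j' := by rcases hfix.2 with h | h <;> omega
  have hgg : ∀ k, v'.g k = v.g k := by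
    intro k
    by_cases hk : k ∈ Finset.Icc 1 m
    swap
    · rw [v.hg' k hk, v'.hg' k hk]
    by_contra hne2
    have hA : v'.g k = i := by
      by_contra hA
      exact hne2 (geq_of_fib' hk (hfib _ k (fun hh => hA hh.1) (fun hh => hA hh.1)))
    have hB : v.g k = i := by
      by_contra hB
      exact hne2 (geq_of_fib hk (hfib _ k (fun hh => hB hh.1) (fun hh => hB hh.1)))
    exact hne2 (hA.trans hB.symm)
  have hgeq : v'.g = v.g := funext hgg
  have hfoff : ∀ k, k ≠ i → v'.f k = v.f k := by
    intro k hki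
    by_cases hk : k ∈ Finset.Icc 1 n
    · exact feq_of_fib hk (hfib k (v.f k) (fun hh => hki hh.1) (fun hh => hki hh.1))
    · rw [v.hf' k hk, v'.hf' k hk]
  have hmax : IsMaxBelow E i (v.f i) (v'.f i) := by
    refine ⟨by rw [hfi']; exact mem_Nbr hE1', by omega, ?_⟩
    intro jj hjN hjlt
    by_contra hcon
    push_neg at hcon
    have hEjj : (i, jj) ∈ E := Nbr_mem hjN
    have hne1 : ¬(i = i ∧ jj = j) := fun hh => by omega
    have hne2 : ¬(i = i ∧ jj = j') := fun hh => by omega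
    obtain ⟨aa, cc, hm⟩ := ex_mem v hEjj
    have hmm := (memp v).1 hm
    have haa : aa = 1 := hmm.2.2.2.2.1 (by omega)
    have hm' := (hfib i jj hne1 hne2 aa cc).1 hm
    have := ((memp v').1 hm').2.2.2.1 (by omega)
    omega
  have hs'j : v'.s (i,j) = false := s_false v' hE1 (fun hh => by omega)
  have hsj' : v.s (i,j') = false := s_false v hE1' (fun hh => by omega)
  have hs'j' : v'.s (i,j') = false := by
    by_cases hgj' : v.g j' = i
    · have hgj'2 : v'.g j' = i := by rw [hgg]; exact hgj'
      have hmem : (1,(i,j'),2) ∈ phi v := (memp v).2 ⟨hE1', by omega, by omega,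
        by omega, by omega, by omega, by omega, fun hfe _ => absurd hfe (by omega)⟩
      have hmem' : (1,(i,j'),2) ∈ phi v' :=
        (key (1,(i,j'),2)).1 ⟨hmem, by simp only [Ne, Prod.mk.injEq]; omega⟩ |>.1
      have := (s_true_iff v' hE1' hfi' hgj'2)
      rcases hb : v'.s (i,j') with _ | _
      · rfl
      · exact absurd hmem' (this.1 hb)
    · refine s_false v' hE1' (fun hh => hgj' ?_)
      rw [← hgg]; exact hh.2
  have hsoff : ∀ q, q ≠ (i,j) → v'.s q = v.s q := by
    rintro ⟨qi, qj⟩ hq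
    by_cases hqE : (qi,qj) ∈ E
    · by_cases hq2 : qi = i ∧ qj = j'
      · obtain ⟨rfl, rfl⟩ := hq2; rw [hs'j', hsj']
      · refine (fib_s hqE (hfib qi qj ?_ hq2)).symm
        simp only [Ne, Prod.mk.injEq] at hq
        exact hq
    · rw [v.hs' _ hqE, v'.hs' _ hqE]
  by_cases hgj : v.g j = i
  · -- sign flip case
    have hsj : v.s (i,j) = true := by
      rcases hb : v.s (i,j) with _ | _
      · exfalso
        have hnot : (2,(i,j),1) ∉ phi v := (s_false_iff v hE1 hfi hgj).1 hb
        have hgj2 : v'.g j = i := by rw [hgg]; exact hgj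
        have hmem' : (2,(i,j),1) ∈ phi v' := (memp v').2 ⟨hE1, by omega, by omega,
          by omega, by omega, by omega, by omega, fun hfe _ => absurd hfe (by omega)⟩
        have hmem : (2,(i,j),1) ∈ phi v :=
          ((key (2,(i,j),1)).symm.1 ⟨hmem', by simp only [Ne, Prod.mk.injEq]; omega⟩).1
        exact hnot hmem
      · rfl
    exact Or.inr ⟨(i,j), hE1, hsj, hs'j, hsoff, Or.inl ⟨hgeq, hfoff, by
      show IsMaxBelow E i j (v'.f i); rw [← hfi]; exact hmax⟩⟩
  · -- pure f move
    have hsj : v.s (i,j) = false := s_false v hE1 (fun hh => hgj hh.2)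
    have hsall : v'.s = v.s := by
      funext q
      by_cases hq : q = (i,j)
      · rw [hq, hs'j, hsj]
      · exact hsoff q hq
    exact Or.inl ⟨i, by simp only [Finset.mem_Icc] at hi; omega,
      by simp only [Finset.mem_Icc] at hi; omega, hgeq, hsall, by omega,
      hfoff, by rw [hfi]; exact hgj, hmax⟩

lemma feq_of_fib2 {v v' : CliqueVec n m E} {k : ℕ} (hk : k ∈ Finset.Icc 1 n)
    (hfib : FibEq v v' k (v.f k)) : v'.f k = v.f k :=
  (fib_f_eq (v.hf k hk) hfib).1 rfl

lemma geq_of_fib2 {v v' : CliqueVec n m E} {k : ℕ} (hk : k ∈ Finset.Icc 1 m)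
    (hfib : FibEq v v' (v.g k) k) : v'.g k = v.g k :=
  (fib_g_eq (v.hg k hk) hfib).1 rfl

lemma feq_of_fib2' {v v' : CliqueVec n m E} {k : ℕ} (hk : k ∈ Finset.Icc 1 n)
    (hfib : FibEq v v' k (v'.f k)) : v'.f k = v.f k :=
  ((fib_f_eq (v'.hf k hk) hfib).2 rfl).symm

lemma geq_of_fib2' {v v' : CliqueVec n m E} {k : ℕ} (hk : k ∈ Finset.Icc 1 m)
    (hfib : FibEq v v' (v'.g k) k) : v'.g k = v.g k :=
  ((fib_g_eq (v'.hg k hk) hfib).2 rfl).symm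

set_option maxHeartbeats 1000000 in
lemma fwdC {v v' : CliqueVec n m E}
    (hE : ∀ p ∈ E, 1 ≤ p.1 ∧ p.1 ≤ n ∧ 1 ≤ p.2 ∧ p.2 ≤ m)
    {a c a' c' i i' j : ℕ}
    (hr : (a,(i,j),c) ∈ phi v) (hr' : (a',(i',j),c') ∈ phi v')
    (hlt : i < i') (hc2 : c = 2) (hc1' : c' = 1)
    (heq : phi v \ {(a,(i,j),c)} = phi v' \ {(a',(i',j),c')}) :
    ((∃ j₀, 1 ≤ j₀ ∧ j₀ ≤ m ∧ v'.f = v.f ∧ v'.s = v.s ∧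
          v'.g j₀ ≠ v.g j₀ ∧ (∀ j, j ≠ j₀ → v'.g j = v.g j) ∧
          v.f (v.g j₀) ≠ j₀ ∧ IsMinAbove E j₀ (v.g j₀) (v'.g j₀)) ∨
     (∃ p ∈ E, v.s p = true ∧ v'.s p = false ∧ (∀ q, q ≠ p → v'.s q = v.s q) ∧
          ((v'.g = v.g ∧ (∀ i, i ≠ p.1 → v'.f i = v.f i) ∧
              IsMaxBelow E p.1 p.2 (v'.f p.1)) ∨
           (v'.f = v.f ∧ (∀ j, j ≠ p.2 → v'.g j = v.g j) ∧
              IsMinAbove E p.2 p.1 (v'.g p.2))))) := by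
  subst hc2 hc1'
  obtain ⟨hE1, ha12, hc12, o1, o2, o3, o4, h8⟩ := (memp v).1 hr
  obtain ⟨hE1', ha12', hc12', o1', o2', o3', o4', h8'⟩ := (memp v').1 hr'
  have key : ∀ x : Route, (x ∈ phi v ∧ x ≠ (a,(i,j),2)) ↔ (x ∈ phi v' ∧ x ≠ (a',(i',j),1)) := by
    intro x
    have h := Set.ext_iff.mp heq x
    simpa [Set.mem_diff] using h
  have hfib : ∀ ii jj, ¬(ii = i ∧ jj = j) → ¬(ii = i' ∧ jj = j) → FibEq v v' ii jj := by
    intro ii jj hn1 hn2 aa cc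
    have k := key (aa,(ii,jj),cc)
    have e1 : (aa,(ii,jj),cc) ≠ (a,(i,j),2) := by
      simp only [Ne, Prod.mk.injEq]; intro hh; exact hn1 ⟨hh.2.1.1, hh.2.1.2⟩
    have e2 : (aa,(ii,jj),cc) ≠ (a',(i',j),1) := by
      simp only [Ne, Prod.mk.injEq]; intro hh; exact hn2 ⟨hh.2.1.1, hh.2.1.2⟩
    constructor
    · intro hm; exact (k.1 ⟨hm, e1⟩).1
    · intro hm; exact ((k.symm).1 ⟨hm, e2⟩).1
  have hj : j ∈ Finset.Icc 1 m := by
    have := hE _ hE1; simp only [Finset.mem_Icc]; exact ⟨this.2.2.1, this.2.2.2⟩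
  have hglt : ¬ (i < v.g j) := fun h => by have := o4 h; omega
  have hggt' : ¬ (v'.g j < i') := fun h => by have := o3' h; omega
  have hne : v'.g j ≠ v.g j := by omega
  have hfix := fix_g hj (fun ii hEii hn1 hn2 =>
    hfib ii j (fun hh => hn1 hh.1) (fun hh => hn2 hh.1)) hne
  have hgj : v.g j = i := by rcases hfix.1 with h | h <;> omega
  have hgj' : v'.g j = i' := by rcases hfix.2 with h | h <;> omega
  have hff : ∀ k, v'.f k = v.f k := by
    intro k
    by_cases hk : k ∈ Finset.Icc 1 n
    swap
    · rw [v.hf' k hk, v'.hf' k hk]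
    by_contra hne2
    have hA : v'.f k = j := by
      by_contra hA
      exact hne2 (feq_of_fib2' hk (hfib k _ (fun hh => hA hh.2) (fun hh => hA hh.2)))
    have hB : v.f k = j := by
      by_contra hB
      exact hne2 (feq_of_fib2 hk (hfib k _ (fun hh => hB hh.2) (fun hh => hB hh.2)))
    exact hne2 (hA.trans hB.symm)
  have hfeq : v'.f = v.f := funext hff
  have hgoff : ∀ k, k ≠ j → v'.g k = v.g k := by
    intro k hkj
    by_cases hk : k ∈ Finset.Icc 1 m
    · exact geq_of_fib2 hk (hfib (v.g k) k (fun hh => hkj hh.2) (fun hh => hkj hh.2))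
    · rw [v.hg' k hk, v'.hg' k hk]
  have hmin : IsMinAbove E j (v.g j) (v'.g j) := by
    refine ⟨by rw [hgj']; exact mem_Nbr' hE1', by omega, ?_⟩
    intro ii hiN hilt
    by_contra hcon
    push_neg at hcon
    have hEii : (ii, j) ∈ E := Nbr'_mem hiN
    have hne1 : ¬(ii = i ∧ j = j) := fun hh => by omega
    have hne2 : ¬(ii = i' ∧ j = j) := fun hh => by omega
    obtain ⟨aa, cc, hm⟩ := ex_mem v hEii
    have hmm := (memp v).1 hm
    have hcc : cc = 2 := hmm.2.2.2.2.2.1 (by omega)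
    have hm' := (hfib ii j hne1 hne2 aa cc).1 hm
    have := ((memp v').1 hm').2.2.2.2.2.2.1 (by omega)
    omega
  have hs'j : v'.s (i,j) = false := s_false v' hE1 (fun hh => by omega)
  have hsj' : v.s (i',j) = false := s_false v hE1' (fun hh => by omega)
  have hs'j' : v'.s (i',j) = false := by
    by_cases hfj' : v.f i' = j
    · have hfj'2 : v'.f i' = j := by rw [hff]; exact hfj'
      have hmem : (1,(i',j),2) ∈ phi v := (memp v).2 ⟨hE1', by omega, by omega,
        by omega, by omega, by omega, by omega, fun _ hge => absurd hge (by omega)⟩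
      have hmem' : (1,(i',j),2) ∈ phi v' :=
        (key (1,(i',j),2)).1 ⟨hmem, by simp only [Ne, Prod.mk.injEq]; omega⟩ |>.1
      have := s_true_iff v' hE1' hfj'2 hgj'
      rcases hb : v'.s (i',j) with _ | _
      · rfl
      · exact absurd hmem' (this.1 hb)
    · refine s_false v' hE1' (fun hh => hfj' ?_)
      rw [← hff]; exact hh.1
  have hsoff : ∀ q, q ≠ (i,j) → v'.s q = v.s q := by
    rintro ⟨qi, qj⟩ hq
    by_cases hqE : (qi,qj) ∈ E
    · by_cases hq2 : qi = i' ∧ qj = j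
      · obtain ⟨rfl, rfl⟩ := hq2; rw [hs'j', hsj']
      · refine (fib_s hqE (hfib qi qj ?_ hq2)).symm
        simp only [Ne, Prod.mk.injEq] at hq
        exact hq
    · rw [v.hs' _ hqE, v'.hs' _ hqE]
  by_cases hfj : v.f i = j
  · -- sign flip case
    have hsj : v.s (i,j) = true := by
      rcases hb : v.s (i,j) with _ | _
      · exfalso
        have hnot : (2,(i,j),1) ∉ phi v := (s_false_iff v hE1 hfj hgj).1 hb
        have hfj2 : v'.f i = j := by rw [hff]; exact hfj
        have hmem' : (2,(i,j),1) ∈ phi v' := (memp v').2 ⟨hE1, by omega, by omega,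
          by omega, by omega, by omega, by omega, fun _ hge => absurd hge (by omega)⟩
        have hmem : (2,(i,j),1) ∈ phi v :=
          ((key (2,(i,j),1)).symm.1 ⟨hmem', by simp only [Ne, Prod.mk.injEq]; omega⟩).1
        exact hnot hmem
      · rfl
    exact Or.inr ⟨(i,j), hE1, hsj, hs'j, hsoff, Or.inr ⟨hfeq, hgoff, by
      show IsMinAbove E j i (v'.g j); rw [← hgj]; exact hmin⟩⟩
  · -- pure g move
    have hsj : v.s (i,j) = false := s_false v hE1 (fun hh => hfj hh.1)
    have hsall : v'.s = v.s := by
      funext q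
      by_cases hq : q = (i,j)
      · rw [hq, hs'j, hsj]
      · exact hsoff q hq
    exact Or.inl ⟨j, by simp only [Finset.mem_Icc] at hj; omega,
      by simp only [Finset.mem_Icc] at hj; omega, hfeq, hsall, by omega,
      hgoff, by rw [hgj]; exact hfj, hmin⟩

lemma feq_of_fib3 {v v' : CliqueVec n m E} {k : ℕ} (hk : k ∈ Finset.Icc 1 n)
    (hfib : FibEq v v' k (v.f k)) : v'.f k = v.f k :=
  (fib_f_eq (v.hf k hk) hfib).1 rfl

lemma geq_of_fib3 {v v' : CliqueVec n m E} {k : ℕ} (hk : k ∈ Finset.Icc 1 m)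
    (hfib : FibEq v v' (v.g k) k) : v'.g k = v.g k :=
  (fib_g_eq (v.hg k hk) hfib).1 rfl

set_option maxHeartbeats 1000000 in
lemma fwdA {v v' : CliqueVec n m E}
    (hE : ∀ p ∈ E, 1 ≤ p.1 ∧ p.1 ≤ n ∧ 1 ≤ p.2 ∧ p.2 ≤ m)
    {i j : ℕ}
    (hr : (1,(i,j),2) ∈ phi v) (hr' : (2,(i,j),1) ∈ phi v')
    (heq : phi v \ {(1,(i,j),2)} = phi v' \ {(2,(i,j),1)}) :
    (v'.f = v.f ∧ v'.g = v.g ∧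
      ∃ p ∈ E, v.s p = false ∧ v'.s p = true ∧ ∀ q, q ≠ p → v'.s q = v.s q) := by
  obtain ⟨hE1, ha12, hc12, o1, o2, o3, o4, h8⟩ := (memp v).1 hr
  obtain ⟨hE1', ha12', hc12', o1', o2', o3', o4', h8'⟩ := (memp v').1 hr'
  have key : ∀ x : Route, (x ∈ phi v ∧ x ≠ (1,(i,j),2)) ↔ (x ∈ phi v' ∧ x ≠ (2,(i,j),1)) := by
    intro x
    have h := Set.ext_iff.mp heq x
    simpa [Set.mem_diff] using h
  have hfib : ∀ ii jj, ¬(ii = i ∧ jj = j) → FibEq v v' ii jj := by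
    intro ii jj hn1 aa cc
    have k := key (aa,(ii,jj),cc)
    have e1 : (aa,(ii,jj),cc) ≠ (1,(i,j),2) := by
      simp only [Ne, Prod.mk.injEq]; intro hh; exact hn1 ⟨hh.2.1.1, hh.2.1.2⟩
    have e2 : (aa,(ii,jj),cc) ≠ (2,(i,j),1) := by
      simp only [Ne, Prod.mk.injEq]; intro hh; exact hn1 ⟨hh.2.1.1, hh.2.1.2⟩
    constructor
    · intro hm; exact (k.1 ⟨hm, e1⟩).1
    · intro hm; exact ((k.symm).1 ⟨hm, e2⟩).1
  have hi : i ∈ Finset.Icc 1 n := by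
    have := hE _ hE1; simp only [Finset.mem_Icc]; exact ⟨this.1, this.2.1⟩
  have hj : j ∈ Finset.Icc 1 m := by
    have := hE _ hE1; simp only [Finset.mem_Icc]; exact ⟨this.2.2.1, this.2.2.2⟩
  have hflt : ¬ (v.f i < j) := fun h => by have := o1 h; omega
  have hfgt' : ¬ (j < v'.f i) := fun h => by have := o2' h; omega
  have hglt : ¬ (i < v.g j) := fun h => by have := o4 h; omega
  have hggt' : ¬ (v'.g j < i) := fun h => by have := o3' h; omega
  have hfibrow := fun jj (hn : jj ≠ j) => hfib i jj (fun hh => hn hh.2)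
  have hfi : v.f i = j := by
    by_contra hfij
    have hne : v'.f i ≠ v.f i := by omega
    have := (fix_f (j1 := j) (j2 := j) hi (fun jj hEjj hn1 _ => hfibrow jj hn1) hne).1
    omega
  have hfi' : v'.f i = j := by
    by_contra hfij
    have hne : v'.f i ≠ v.f i := by omega
    have := (fix_f (j1 := j) (j2 := j) hi (fun jj hEjj hn1 _ => hfibrow jj hn1) hne).2
    omega
  have hfibcol := fun ii (hn : ii ≠ i) => hfib ii j (fun hh => hn hh.1)
  have hgj : v.g j = i := by
    by_contra hgij
    have hne : v'.g j ≠ v.g j := by omega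
    have := (fix_g (i1 := i) (i2 := i) hj (fun ii hEii hn1 _ => hfibcol ii hn1) hne).1
    omega
  have hgj' : v'.g j = i := by
    by_contra hgij
    have hne : v'.g j ≠ v.g j := by omega
    have := (fix_g (i1 := i) (i2 := i) hj (fun ii hEii hn1 _ => hfibcol ii hn1) hne).2
    omega
  have hsj : v.s (i,j) = false := by
    rcases hb : v.s (i,j) with _ | _
    · rfl
    · exact absurd ⟨rfl, rfl⟩ ((h8 hfi hgj).1 hb)
  have hs'j : v'.s (i,j) = true := by
    rcases hb : v'.s (i,j) with _ | _
    · exact absurd ⟨rfl, rfl⟩ ((h8' hfi' hgj').2 hb)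
    · rfl
  have hfeq : v'.f = v.f := by
    funext k
    by_cases hk : k ∈ Finset.Icc 1 n
    · by_cases hki : k = i
      · subst hki; rw [hfi', hfi]
      · exact feq_of_fib3 hk (hfib k (v.f k) (fun hh => hki hh.1))
    · rw [v.hf' k hk, v'.hf' k hk]
  have hgeq : v'.g = v.g := by
    funext k
    by_cases hk : k ∈ Finset.Icc 1 m
    · by_cases hkj : k = j
      · subst hkj; rw [hgj', hgj]
      · exact geq_of_fib3 hk (hfib (v.g k) k (fun hh => hkj hh.2))
    · rw [v.hg' k hk, v'.hg' k hk]
  refine ⟨hfeq, hgeq, (i,j), hE1, hsj, hs'j, ?_⟩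
  rintro ⟨qi, qj⟩ hq
  by_cases hqE : (qi,qj) ∈ E
  · refine (fib_s hqE (hfib qi qj ?_)).symm
    simp only [Ne, Prod.mk.injEq] at hq
    exact hq
  · rw [v.hs' _ hqE, v'.hs' _ hqE]

/-- Characterization of the cover relation (single counterclockwise rotation)
in the framing lattice, in terms of clique vectors. -/
theorem cover_characterization (n m : ℕ) (hn : 1 ≤ n) (hm : 1 ≤ m) (E : Finset (ℕ × ℕ))
    (hE : ∀ p ∈ E, 1 ≤ p.1 ∧ p.1 ≤ n ∧ 1 ≤ p.2 ∧ p.2 ≤ m)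
    (hdegS : ∀ i ∈ Finset.Icc 1 n, 2 ≤ (Nbr E i).card)
    (hdegT : ∀ j ∈ Finset.Icc 1 m, 2 ≤ (Nbr' E j).card)
    (v v' : CliqueVec n m E) :
    CCWStep (phi v) (phi v') ↔
      ((∃ i₀, 1 ≤ i₀ ∧ i₀ ≤ n ∧ v'.g = v.g ∧ v'.s = v.s ∧
          v'.f i₀ ≠ v.f i₀ ∧ (∀ i, i ≠ i₀ → v'.f i = v.f i) ∧
          v.g (v.f i₀) ≠ i₀ ∧ IsMaxBelow E i₀ (v.f i₀) (v'.f i₀)) ∨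
       (∃ j₀, 1 ≤ j₀ ∧ j₀ ≤ m ∧ v'.f = v.f ∧ v'.s = v.s ∧
          v'.g j₀ ≠ v.g j₀ ∧ (∀ j, j ≠ j₀ → v'.g j = v.g j) ∧
          v.f (v.g j₀) ≠ j₀ ∧ IsMinAbove E j₀ (v.g j₀) (v'.g j₀)) ∨
       (v'.f = v.f ∧ v'.g = v.g ∧
          ∃ p ∈ E, v.s p = false ∧ v'.s p = true ∧ ∀ q, q ≠ p → v'.s q = v.s q) ∨
       (∃ p ∈ E, v.s p = true ∧ v'.s p = false ∧ (∀ q, q ≠ p → v'.s q = v.s q) ∧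
          ((v'.g = v.g ∧ (∀ i, i ≠ p.1 → v'.f i = v.f i) ∧
              IsMaxBelow E p.1 p.2 (v'.f p.1)) ∨
           (v'.f = v.f ∧ (∀ j, j ≠ p.2 → v'.g j = v.g j) ∧
              IsMinAbove E p.2 p.1 (v'.g p.2))))) := by
  constructor
  · intro h
    obtain ⟨r, hr, r', hr', hcw, heq⟩ := h
    obtain ⟨a, ⟨i, j⟩, c⟩ := r
    obtain ⟨a', ⟨i', j'⟩, c'⟩ := r'
    simp only [Clockwise] at hcw
    rcases hcw with ⟨hpair, ha1, hc2, ha2', hc1'⟩ | ⟨hieq, hlt, ha1, ha2'⟩ | ⟨hjeq, hlt, hc2, hc1'⟩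
    · -- same edge: sign flip false → true
      simp only [Prod.mk.injEq] at hpair
      obtain ⟨hii, hjj⟩ := hpair
      subst hii; subst hjj; subst ha1; subst hc2; subst ha2'; subst hc1'
      exact Or.inr (Or.inr (Or.inl (fwdA hE hr hr' heq)))
    · -- same row
      subst hieq; subst ha1; subst ha2'
      rcases fwdB hE hr hr' hlt rfl rfl heq with h | h
      · exact Or.inl h
      · exact Or.inr (Or.inr (Or.inr h))
    · -- same column
      subst hjeq; subst hc2; subst hc1'
      rcases fwdC hE hr hr' hlt rfl rfl heq with h | h
      · exact Or.inr (Or.inl h)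
      · exact Or.inr (Or.inr (Or.inr h))
  · rintro (⟨i₀, h1n, h2n, hgeq, hseq, hfne, hfoff, hgfne, hmax⟩ |
            ⟨j₀, h1m, h2m, hfeq, hseq, hgne, hgoff, hfgne, hmin⟩ |
            ⟨hfeq, hgeq, ⟨pi, pj⟩, hpE, hs1, hs2, hsoff⟩ |
            ⟨⟨pi, pj⟩, hpE, hs1, hs2, hsoff, hbranch⟩)
    · exact rev_f (Finset.mem_Icc.2 ⟨h1n, h2n⟩) hgeq hfoff hmax
        (fun q _ => by rw [hseq]) (fun h => absurd h hgfne)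
    · exact rev_g (Finset.mem_Icc.2 ⟨h1m, h2m⟩) hfeq hgoff hmin
        (fun q _ => by rw [hseq]) (fun h => absurd h hfgne)
    · exact rev_s hfeq hgeq hpE hs1 hs2 hsoff
    · have hf1 : v.f pi = pj := (v.hs (pi,pj) hpE hs1).1
      have hg1 : v.g pj = pi := (v.hs (pi,pj) hpE hs1).2
      rcases hbranch with ⟨hgeq, hfoff, hmax⟩ | ⟨hfeq, hgoff, hmin⟩
      · have hi : pi ∈ Finset.Icc 1 n := by
          have := hE _ hpE; exact Finset.mem_Icc.2 ⟨this.1, this.2.1⟩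
        exact rev_f hi hgeq hfoff (by rw [hf1]; exact hmax)
          (fun q hq => hsoff q (by rwa [hf1] at hq))
          (fun _ => by rw [hf1]; exact hs1)
      · have hj : pj ∈ Finset.Icc 1 m := by
          have := hE _ hpE; exact Finset.mem_Icc.2 ⟨this.2.2.1, this.2.2.2⟩
        exact rev_g hj hfeq hgoff (by rw [hg1]; exact hmin)
          (fun q hq => hsoff q (by rwa [hg1] at hq))
          (fun _ => by rw [hg1]; exact hs1)
end

section
/- For every maximal clique C of routes of G(H) with respect to the canonical bipartite framing and every edge (i,j) ∈ E, the clique C contains at least one route of the form (a,(i,j),c), i.e., at least one route passing through the edge β_{i,j}. -/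
open Finset Filter Pointwise

lemma conflict_symm {r r' : Route} (h : Conflict r r') : Conflict r' r := by
  rcases h with ⟨h1, h2 | h2⟩ | ⟨h1, hne, h3 | h3⟩ | ⟨h1, hne, h3 | h3⟩
  · exact Or.inl ⟨h1.symm, Or.inr ⟨h2.2.2.1, h2.2.2.2, h2.1, h2.2.1⟩⟩
  · exact Or.inl ⟨h1.symm, Or.inl ⟨h2.2.2.1, h2.2.2.2, h2.1, h2.2.1⟩⟩
  · exact Or.inr (Or.inl ⟨h1.symm, hne.symm, Or.inr ⟨h3.1, h3.2.1, h3.2.2⟩⟩)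
  · exact Or.inr (Or.inl ⟨h1.symm, hne.symm, Or.inl ⟨h3.1, h3.2.1, h3.2.2⟩⟩)
  · exact Or.inr (Or.inr ⟨h1.symm, hne.symm, Or.inr ⟨h3.1, h3.2.1, h3.2.2⟩⟩)
  · exact Or.inr (Or.inr ⟨h1.symm, hne.symm, Or.inl ⟨h3.1, h3.2.1, h3.2.2⟩⟩)

/-- Every maximal clique contains at least one route through each edge `β_{i,j}`. -/
theorem maxclique_covers_every_edge (n m : ℕ) (hn : 1 ≤ n) (hm : 1 ≤ m) (E : Finset (ℕ × ℕ))
    (hE : ∀ p ∈ E, 1 ≤ p.1 ∧ p.1 ≤ n ∧ 1 ≤ p.2 ∧ p.2 ≤ m)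
    (hdegS : ∀ i ∈ Finset.Icc 1 n, 2 ≤ (Nbr E i).card)
    (hdegT : ∀ j ∈ Finset.Icc 1 m, 2 ≤ (Nbr' E j).card) :
    ∀ C : Set Route, IsMaxClique E C → ∀ p ∈ E, ∃ a c : ℕ, (a, p, c) ∈ C := by
  classical
  rintro C ⟨⟨hCr, hCc⟩, hmax⟩ p hp
  by_cases hsame : ∃ r ∈ C, r.2.1 = p
  · obtain ⟨⟨a, q, c⟩, hrC, hq⟩ := hsame
    simp only at hq
    subst hq
    exact ⟨a, c, hrC⟩
  · push_neg at hsame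
    set A : Prop := ∃ r ∈ C, r.2.1.1 = p.1 ∧ p.2 < r.2.1.2 ∧ r.1 = 1 with hA
    set B : Prop := ∃ r ∈ C, r.2.1.2 = p.2 ∧ r.2.1.1 < p.1 ∧ r.2.2 = 2 with hB
    set a : ℕ := if A then 1 else 2 with ha
    set c : ℕ := if B then 2 else 1 with hc
    set s : Route := (a, p, c) with hs
    have hsC : ∀ r ∈ C, ¬ Conflict s r := by
      intro r hr hcon
      simp only [hs, Conflict] at hcon
      rcases hcon with ⟨h1, _⟩ | ⟨h1, hne, h3 | h3⟩ | ⟨h1, hne, h3 | h3⟩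
      · exact hsame r hr h1.symm
      · -- p.2 < r.2.1.2, r.1 = 1, a = 2
        have hAholds : A := ⟨r, hr, h1.symm, h3.1, h3.2.1⟩
        have : a = 1 := by rw [ha, if_pos hAholds]
        omega
      · -- r.2.1.2 < p.2, a = 1, r.1 = 2
        have hAholds : A := by
          by_contra hnA
          have : a = 2 := by rw [ha, if_neg hnA]
          omega
        obtain ⟨r0, hr0C, hr01, hr02, hr03⟩ := hAholds
        have hne0 : r ≠ r0 := by
          intro h; rw [h] at h3; omega
        apply hCc r hr r0 hr0C hne0
        exact Or.inr (Or.inl ⟨h1.symm.trans hr01.symm, by omega, Or.inl ⟨by omega, hr03, h3.2.2⟩⟩)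
      · -- p.1 < r.2.1.1, c = 2, r.2.2 = 1
        have hBholds : B := by
          by_contra hnB
          have : c = 1 := by rw [hc, if_neg hnB]
          omega
        obtain ⟨r0, hr0C, hr01, hr02, hr03⟩ := hBholds
        have hne0 : r0 ≠ r := by
          intro h; rw [h] at hr03; omega
        apply hCc r0 hr0C r hr hne0
        exact Or.inr (Or.inr ⟨hr01.trans h1, by omega, Or.inl ⟨by omega, hr03, h3.2.2⟩⟩)
      · -- r.2.1.1 < p.1, r.2.2 = 2, c = 1
        have hBholds : B := ⟨r, hr, h1.symm, h3.1, h3.2.1⟩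
        have : c = 2 := by rw [hc, if_pos hBholds]
        omega
    have hclique : IsClique E (insert s C) := by
      constructor
      · intro r hr
        rcases hr with rfl | hr
        · refine ⟨?_, hp, ?_⟩
          · show a = 1 ∨ a = 2; rw [ha]; split <;> simp
          · show c = 1 ∨ c = 2; rw [hc]; split <;> simp
        · exact hCr r hr
      · intro r hr r' hr' hne
        rcases hr with rfl | hr <;> rcases hr' with rfl | hr'
        · exact absurd rfl hne
        · exact hsC r' hr'
        · intro hcon; exact hsC r hr (conflict_symm hcon)
        · exact hCc r hr r' hr' hne
    have := hmax (insert s C) hclique (Set.subset_insert s C)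
    have hsin : s ∈ C := by rw [← this]; exact Set.mem_insert s C
    exact ⟨a, c, hsin⟩
end
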